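/- Let A(σ) = A₀ + Σ_{m=1}^d σ_m A_m with A₀, …, A_d ∈ ℝ^{n×n} symmetric, regarded as a function of σ ∈ ℂᵈ, and assume its restriction to a nonempty closed bounded set S ⊆ ℝᵈ is spectrally equivalent to Ā with constants 0 < α ≤ β; assume ρ > 1 and αρ > 1. Let σ ∈ ℂᵈ, let σ_S ∈ S be a point of S at minimal Euclidean distance from σ, set σ_P = σ − σ_S and δA_⊥(σ_P) = Σ_{m=1}^d (σ_P)_m W_⊥ᵀ A_m W_⊥. If max over nonzero x ∈ ℂᵐ of |x* δA_⊥(σ_P) x| / (x* M_⊥ x) < (αρ − 1)Λ, then for every t ∈ (0, Λ) the complex matrix A_⊥(σ) − t M_⊥ has trivial null space, i.e. is invertible. -/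

import Mathlib

open Matrix

/-- `Ē`, the span of all eigenvectors `v` of the pencil `(Ā, M)` (`Āv = ξMv`)
with eigenvalue `ξ ∈ (0, c)`. -/
noncomputable def Ebar {n : ℕ} (Abar M : Matrix (Fin n) (Fin n) ℝ) (c : ℝ) :
    Submodule ℝ (Fin n → ℝ) :=
  Submodule.span ℝ {v : Fin n → ℝ |
    v ≠ 0 ∧ ∃ ξ : ℝ, 0 < ξ ∧ ξ < c ∧ Abar.mulVec v = ξ • M.mulVec v}

/-- Entrywise complexification of a real matrix. -/
noncomputable def cmat {n m : ℕ} (X : Matrix (Fin n) (Fin m) ℝ) : Matrix (Fin n) (Fin m) ℂ :=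
  X.map (fun r => (r : ℂ))

lemma dotmv {n m : ℕ} (A : Matrix (Fin n) (Fin m) ℝ) (x : Fin m → ℝ) (u : Fin n → ℝ) :
    x ⬝ᵥ Aᵀ *ᵥ u = (A *ᵥ x) ⬝ᵥ u := by
  rw [Matrix.dotProduct_mulVec, Matrix.vecMul_transpose]

lemma dotmv' {n : ℕ} (A : Matrix (Fin n) (Fin n) ℝ) (x y : Fin n → ℝ) :
    x ⬝ᵥ A *ᵥ y = (Aᵀ *ᵥ x) ⬝ᵥ y := by
  rw [Matrix.dotProduct_mulVec, ← Matrix.vecMul_transpose, transpose_transpose]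

lemma cmat_mul {n m k : ℕ} (X : Matrix (Fin n) (Fin m) ℝ) (Y : Matrix (Fin m) (Fin k) ℝ) :
    cmat (X * Y) = cmat X * cmat Y := by
  have := Matrix.map_mul (L := X) (M := Y) (f := Complex.ofRealHom)
  simpa [cmat, Complex.ofRealHom] using this

lemma cmat_transpose {n m : ℕ} (X : Matrix (Fin n) (Fin m) ℝ) :
    cmat (Xᵀ) = (cmat X)ᵀ := by
  ext i j; simp [cmat]

lemma cmat_add {n m : ℕ} (X Y : Matrix (Fin n) (Fin m) ℝ) :
    cmat (X + Y) = cmat X + cmat Y := by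
  ext i j; simp [cmat]

lemma cmat_smul {n m : ℕ} (r : ℝ) (X : Matrix (Fin n) (Fin m) ℝ) :
    cmat (r • X) = (r : ℂ) • cmat X := by
  ext i j; simp [cmat]

lemma dot_cmat {m k : ℕ} (C : Matrix (Fin m) (Fin k) ℝ) (a : Fin m → ℝ) (b : Fin k → ℝ) :
    (fun i => ((a i : ℂ))) ⬝ᵥ (cmat C) *ᵥ (fun i => ((b i : ℂ))) = ((a ⬝ᵥ C *ᵥ b : ℝ) : ℂ) := by
  have h1 : (cmat C) *ᵥ (fun i => ((b i : ℂ))) = fun i => ((C *ᵥ b) i : ℂ) := by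
    funext i
    exact (RingHom.map_mulVec (Complex.ofRealHom) C b i).symm
  rw [h1]
  simpa [Function.comp_def] using (RingHom.map_dotProduct Complex.ofRealHom a (C *ᵥ b)).symm

lemma qsplit {m : ℕ} (C : Matrix (Fin m) (Fin m) ℝ) (hC : Cᵀ = C) (z : Fin m → ℂ) :
    star z ⬝ᵥ (cmat C) *ᵥ z =
      ((((fun i => (z i).re) ⬝ᵥ C *ᵥ (fun i => (z i).re)
        + (fun i => (z i).im) ⬝ᵥ C *ᵥ (fun i => (z i).im) : ℝ)) : ℂ) := by
  set x : Fin m → ℝ := fun i => (z i).re with hx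
  set y : Fin m → ℝ := fun i => (z i).im with hy
  have hz : z = (fun i => ((x i : ℂ))) + Complex.I • (fun i => ((y i : ℂ))) := by
    funext i
    simp [hx, hy, Complex.ext_iff]
  have hsz : star z = (fun i => ((x i : ℂ))) - Complex.I • (fun i => ((y i : ℂ))) := by
    funext i
    simp [hx, hy, Complex.ext_iff]
  have hsym : y ⬝ᵥ C *ᵥ x = x ⬝ᵥ C *ᵥ y := by
    rw [dotmv' C y x, hC, dotProduct_comm]
  conv_lhs => rw [hsz, hz]
  simp only [sub_dotProduct, dotProduct_add, mulVec_add, mulVec_smul, dotProduct_smul,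
    smul_dotProduct, smul_eq_mul, dot_cmat, hsym]
  push_cast
  ring_nf
  simp [Complex.I_sq]

open scoped RealInnerProductSpace in
lemma key_spectral {n : ℕ} (M Abar : Matrix (Fin n) (Fin n) ℝ) (hM : M.PosDef)
    (hAbar : Abar.PosDef) (c : ℝ) (v : Fin n → ℝ)
    (hv : ∀ w ∈ Ebar Abar M c, v ⬝ᵥ Abar.mulVec w = 0) :
    c * (v ⬝ᵥ M.mulVec v) ≤ v ⬝ᵥ Abar.mulVec v := by
  classical
  obtain ⟨R, hRR, hRsym⟩ : ∃ R : Matrix (Fin n) (Fin n) ℝ, R * R = M ∧ Rᵀ = R := by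
    open scoped MatrixOrder in
    refine ⟨CFC.sqrt M, CFC.sqrt_mul_sqrt_self M hM.posSemidef.nonneg, ?_⟩
    open scoped MatrixOrder in
    have h := (CFC.sqrt_nonneg M).posSemidef.1
    rw [Matrix.IsHermitian, Matrix.conjTranspose_eq_transpose_of_trivial] at h
    exact h
  have hMinj : Function.Injective M.mulVec := Matrix.mulVec_injective_iff_isUnit.mpr hM.isUnit
  have hRinj : Function.Injective R.mulVec := by
    intro a b hab
    have h0 : R *ᵥ (a - b) = 0 := by rw [Matrix.mulVec_sub, hab, sub_self]
    have h1 : M *ᵥ (a - b) = M *ᵥ 0 := by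
      rw [← hRR, ← Matrix.mulVec_mulVec, h0, Matrix.mulVec_zero, Matrix.mulVec_zero]
    have := hMinj h1
    rwa [sub_eq_zero] at this
  have hRunit : IsUnit R := Matrix.mulVec_injective_iff_isUnit.mp hRinj
  have hRdet : IsUnit R.det := (Matrix.isUnit_iff_isUnit_det R).mp hRunit
  set N := R⁻¹ with hNdef
  have hNR : N * R = 1 := Matrix.nonsing_inv_mul R hRdet
  have hRN : R * N = 1 := Matrix.mul_nonsing_inv R hRdet
  have hNsym : Nᵀ = N := by rw [hNdef, Matrix.transpose_nonsing_inv, hRsym]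
  set B := N * Abar * N with hBdef
  have hBsym : Bᵀ = B := by
    rw [hBdef, Matrix.transpose_mul, Matrix.transpose_mul, hNsym]
    have hAsym : Abarᵀ = Abar := (by simpa using hAbar.isHermitian : Abar.IsSymm)
    rw [hAsym, Matrix.mul_assoc]
  -- N *ᵥ x = 0 → x = 0
  have hNker : ∀ x : Fin n → ℝ, N *ᵥ x = 0 → x = 0 := by
    intro x hx
    have : (R * N) *ᵥ x = R *ᵥ (N *ᵥ x) := (Matrix.mulVec_mulVec x R N).symm
    rw [hRN, Matrix.one_mulVec, hx, Matrix.mulVec_zero] at this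
    exact this
  have hBpd : B.PosDef := by
    refine Matrix.PosDef.of_dotProduct_mulVec_pos ?_ ?_
    · exact (Matrix.conjTranspose_eq_transpose_of_trivial B).trans hBsym
    · intro x hx
      have hNx : N *ᵥ x ≠ 0 := fun h => hx (hNker x h)
      have hq : star x ⬝ᵥ B *ᵥ x = (N *ᵥ x) ⬝ᵥ Abar *ᵥ (N *ᵥ x) := by
        have : star x = x := rfl
        rw [this, hBdef, ← Matrix.mulVec_mulVec, ← Matrix.mulVec_mulVec, dotmv' N x _, hNsym]
      have := hAbar.dotProduct_mulVec_pos hNx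
      rw [hq]
      simpa using this
  have hBherm : B.IsHermitian := hBpd.1
  set b := hBherm.eigenvectorBasis with hbdef
  set lam := hBherm.eigenvalues with hlamdef
  have heig : ∀ i, B *ᵥ ⇑(b i) = lam i • ⇑(b i) := fun i => hBherm.mulVec_eigenvectorBasis i
  have hlampos : ∀ i, 0 < lam i := fun i => hBpd.eigenvalues_pos i
  set u : Fin n → ℝ := R *ᵥ v with hudef
  have hNu : N *ᵥ u = v := by
    rw [hudef, Matrix.mulVec_mulVec, hNR, Matrix.one_mulVec]
  -- inner products on EuclideanSpace as dotProduct
  have hinner : ∀ p q : EuclideanSpace ℝ (Fin n), ⟪p, q⟫ = (p : Fin n → ℝ) ⬝ᵥ (q : Fin n → ℝ) := by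
    intro p q
    simp [PiLp.inner_apply, RCLike.inner_apply, dotProduct, mul_comm]
  -- coefficients
  set co : Fin n → ℝ := fun i => ⇑(b i) ⬝ᵥ u with hco
  -- vanishing of small-eigenvalue coefficients
  have hvanish : ∀ i, lam i < c → co i = 0 := by
    intro i hic
    have hbne : (⇑(b i) : Fin n → ℝ) ≠ 0 := by
      have := b.orthonormal.ne_zero i
      intro h
      apply this
      ext j
      exact congrFun h j
    have hw_ne : N *ᵥ ⇑(b i) ≠ 0 := by
      intro h
      exact hbne (hNker _ h)
    have hweq : Abar *ᵥ (N *ᵥ ⇑(b i)) = lam i • M *ᵥ (N *ᵥ ⇑(b i)) := by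
      have h1 : R *ᵥ (B *ᵥ ⇑(b i)) = Abar *ᵥ (N *ᵥ ⇑(b i)) := by
        rw [hBdef, Matrix.mulVec_mulVec, Matrix.mulVec_mulVec, ← Matrix.mul_assoc,
          ← Matrix.mul_assoc, hRN, Matrix.one_mul, ← Matrix.mulVec_mulVec]
      have h2 : M *ᵥ (N *ᵥ ⇑(b i)) = R *ᵥ ⇑(b i) := by
        rw [Matrix.mulVec_mulVec, ← hRR, Matrix.mul_assoc, hRN, Matrix.mul_one]
      rw [← h1, heig i, Matrix.mulVec_smul, h2]
    have hmem : (N *ᵥ ⇑(b i)) ∈ Ebar Abar M c :=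
      Submodule.subset_span ⟨hw_ne, lam i, hlampos i, hic, hweq⟩
    have h0 : v ⬝ᵥ Abar *ᵥ (N *ᵥ ⇑(b i)) = 0 := hv _ hmem
    have h1 : u ⬝ᵥ (B *ᵥ ⇑(b i)) = v ⬝ᵥ Abar *ᵥ (N *ᵥ ⇑(b i)) := by
      rw [hBdef, ← Matrix.mulVec_mulVec _ (N * Abar) N, ← Matrix.mulVec_mulVec _ N Abar,
        dotmv' N u _, hNsym, hNu]
    have h2 : u ⬝ᵥ (B *ᵥ ⇑(b i)) = lam i * co i := by
      rw [heig i, dotProduct_smul, hco, smul_eq_mul, dotProduct_comm]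
    have : lam i * co i = 0 := by rw [← h2, h1, h0]
    rcases mul_eq_zero.mp this with h | h
    · exact absurd h (ne_of_gt (hlampos i))
    · exact h
  -- quadratic forms via u
  have hq1 : v ⬝ᵥ Abar *ᵥ v = u ⬝ᵥ (B *ᵥ u) := by
    rw [hBdef, ← Matrix.mulVec_mulVec _ (N * Abar) N, ← Matrix.mulVec_mulVec _ N Abar,
      dotmv' N u _, hNsym, hNu]
  have hq2 : v ⬝ᵥ M *ᵥ v = u ⬝ᵥ u := by
    rw [← hRR, ← Matrix.mulVec_mulVec, dotmv' R v _, hRsym, ← hudef]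
  -- Parseval expansions
  have hrepr_u : ∀ i, b.repr (WithLp.toLp 2 u) i = co i := by
    intro i
    rw [b.repr_apply_apply, hinner]
  have hrepr_Bu : ∀ i, b.repr (WithLp.toLp 2 (B *ᵥ u)) i
      = lam i * co i := by
    intro i
    rw [b.repr_apply_apply, hinner]
    show ⇑(b i) ⬝ᵥ (B *ᵥ u) = lam i * co i
    rw [dotmv' B _ u, hBsym, heig i, smul_dotProduct, hco, smul_eq_mul]
  have hpar : ∀ p q : EuclideanSpace ℝ (Fin n), ⟪p, q⟫ = ∑ i, b.repr p i * b.repr q i := by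
    intro p q
    rw [← b.repr.inner_map_map p q, hinner]
    rfl
  have hsum1 : u ⬝ᵥ (B *ᵥ u) = ∑ i, lam i * (co i * co i) := by
    have := hpar (WithLp.toLp 2 u) (WithLp.toLp 2 (B *ᵥ u))
    rw [hinner] at this
    simp only [hrepr_u, hrepr_Bu] at this
    rw [show ((WithLp.toLp 2 u : EuclideanSpace ℝ (Fin n)) : Fin n → ℝ) ⬝ᵥ _ = u ⬝ᵥ (B *ᵥ u) from rfl] at this
    rw [this]
    congr 1
    funext i
    ring
  have hsum2 : u ⬝ᵥ u = ∑ i, co i * co i := by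
    have := hpar (WithLp.toLp 2 u) (WithLp.toLp 2 u)
    rw [hinner] at this
    simp only [hrepr_u] at this
    exact this
  rw [hq1, hq2, hsum1, hsum2, Finset.mul_sum]
  apply Finset.sum_le_sum
  intro i _
  by_cases hic : lam i < c
  · rw [hvanish i hic]
    simp
  · push_neg at hic
    have : 0 ≤ co i * co i := mul_self_nonneg _
    nlinarith

lemma cmat_sum {n m : ℕ} {κ : Type*} (s : Finset κ) (f : κ → Matrix (Fin n) (Fin m) ℝ) :
    cmat (∑ k ∈ s, f k) = ∑ k ∈ s, cmat (f k) := by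
  ext i j
  simp [cmat, Matrix.sum_apply]

/-- for `σ ∈ ℂᵈ` with nearest point `σ_S ∈ S` and
`σ_P = σ - σ_S`, if `max_{0 ≠ x ∈ ℂᵐ} |x* δA⊥(σ_P) x| / (x* M⊥ x) < (αρ - 1)Λ`,
then for every `t ∈ (0,Λ)` the complex matrix `A⊥(σ) - t M⊥` has trivial null
space, i.e. is invertible. -/
theorem stmt_11 {n m d : ℕ} (S : Set (Fin d → ℝ)) (hSne : S.Nonempty)
    (hScl : IsClosed S) (hSbd : Bornology.IsBounded S)
    (M Abar : Matrix (Fin n) (Fin n) ℝ) (hM : M.PosDef) (hAbar : Abar.PosDef)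
    (A0 : Matrix (Fin n) (Fin n) ℝ) (Am : Fin d → Matrix (Fin n) (Fin n) ℝ)
    (hA0 : A0.IsSymm) (hAm : ∀ k, (Am k).IsSymm)
    (hApd : ∀ σ ∈ S, (A0 + ∑ k, σ k • Am k).PosDef)
    (α β Λ ρ : ℝ) (hα : 0 < α) (hαβ : α ≤ β) (hΛ : 0 < Λ) (hρ : 1 < ρ) (hαρ : 1 < α * ρ)
    (hspec : ∀ σ ∈ S, ∀ v : Fin n → ℝ,
      α * (v ⬝ᵥ Abar.mulVec v) ≤ v ⬝ᵥ (A0 + ∑ k, σ k • Am k).mulVec v ∧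
        v ⬝ᵥ (A0 + ∑ k, σ k • Am k).mulVec v ≤ β * (v ⬝ᵥ Abar.mulVec v))
    (Wperp : Matrix (Fin n) (Fin m) ℝ)
    (hWmem : ∀ j, ∀ w ∈ Ebar Abar M (ρ * Λ), (fun i => Wperp i j) ⬝ᵥ Abar.mulVec w = 0)
    (hWspan : ∀ v : Fin n → ℝ,
      (∀ w ∈ Ebar Abar M (ρ * Λ), v ⬝ᵥ Abar.mulVec w = 0) → ∃ c, v = Wperp.mulVec c)
    (hWli : ∀ c : Fin m → ℝ, Wperp.mulVec c = 0 → c = 0)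
    (σ : Fin d → ℂ) (σS : Fin d → ℝ) (hσS : σS ∈ S)
    -- `σ_S` is a closest point of `S` to `σ` (Euclidean distance):
    (hmin : ∀ τ ∈ S, ∑ k, ‖σ k - (σS k : ℂ)‖ ^ 2 ≤
      ∑ k, ‖σ k - (τ k : ℂ)‖ ^ 2)
    -- `max_{0 ≠ x ∈ ℂᵐ} |x* δA⊥(σ_P) x| / (x* M⊥ x) < (αρ - 1)Λ`:
    (hsmall : ∀ x : Fin m → ℂ, x ≠ 0 →
      ‖star x ⬝ᵥ
          (∑ k, (σ k - (σS k : ℂ)) • cmat (Wperpᵀ * Am k * Wperp)).mulVec x‖ /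
        (star x ⬝ᵥ (cmat (Wperpᵀ * M * Wperp)).mulVec x).re < (α * ρ - 1) * Λ)
    (t : ℝ) (ht : t ∈ Set.Ioo 0 Λ) :
    (∀ z : Fin m → ℂ,
        ((cmat Wperp)ᵀ * (cmat A0 + ∑ k, σ k • cmat (Am k) - (t : ℂ) • cmat M) *
            cmat Wperp).mulVec z = 0 → z = 0) ∧
      IsUnit ((cmat Wperp)ᵀ * (cmat A0 + ∑ k, σ k • cmat (Am k) - (t : ℂ) • cmat M) *
        cmat Wperp) := by
  classical
  obtain ⟨ht0, htΛ⟩ := ht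
  set AS : Matrix (Fin n) (Fin n) ℝ := A0 + ∑ k, σS k • Am k with hAS
  set C1 : Matrix (Fin m) (Fin m) ℝ := Wperpᵀ * AS * Wperp with hC1
  set C2 : Matrix (Fin m) (Fin m) ℝ := Wperpᵀ * M * Wperp with hC2
  set D : Matrix (Fin m) (Fin m) ℂ :=
    ∑ k, (σ k - (σS k : ℂ)) • cmat (Wperpᵀ * Am k * Wperp) with hD
  set T : Matrix (Fin m) (Fin m) ℂ :=
    (cmat Wperp)ᵀ * (cmat A0 + ∑ k, σ k • cmat (Am k) - (t : ℂ) • cmat M) * cmat Wperp with hTdef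
  -- symmetry facts
  have hMsym : Mᵀ = M := (by simpa using hM.isHermitian : M.IsSymm)
  have hsum_t : (∑ k : Fin d, σS k • Am k)ᵀ = ∑ k : Fin d, σS k • Am k := by
    rw [Matrix.transpose_sum]
    exact Finset.sum_congr rfl fun k _ => by rw [Matrix.transpose_smul, (hAm k).eq]
  have hASsym : ASᵀ = AS := by rw [hAS, Matrix.transpose_add, hA0.eq, hsum_t]
  have hC1sym : C1ᵀ = C1 := by
    rw [hC1, Matrix.transpose_mul, Matrix.transpose_mul, Matrix.transpose_transpose, hASsym,
      Matrix.mul_assoc]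
  have hC2sym : C2ᵀ = C2 := by
    rw [hC2, Matrix.transpose_mul, Matrix.transpose_mul, Matrix.transpose_transpose, hMsym,
      Matrix.mul_assoc]
  -- congruence identity for cmat
  have conj3 : ∀ Y : Matrix (Fin n) (Fin n) ℝ,
      (cmat Wperp)ᵀ * cmat Y * cmat Wperp = cmat (Wperpᵀ * Y * Wperp) := by
    intro Y
    rw [cmat_mul, cmat_mul, cmat_transpose]
  -- the matrix identity
  have hT : T = cmat C1 + D - (t : ℂ) • cmat C2 := by
    have expand : T = (cmat Wperp)ᵀ * cmat A0 * cmat Wperp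
        + ∑ k, σ k • ((cmat Wperp)ᵀ * cmat (Am k) * cmat Wperp)
        - (t : ℂ) • ((cmat Wperp)ᵀ * cmat M * cmat Wperp) := by
      rw [hTdef, Matrix.mul_sub, Matrix.sub_mul, Matrix.mul_add, Matrix.add_mul,
        Matrix.mul_sum, Matrix.sum_mul]
      simp only [Matrix.mul_smul, Matrix.smul_mul]
    rw [expand]
    simp only [conj3]
    have hC1c : cmat C1 = cmat (Wperpᵀ * A0 * Wperp)
        + ∑ k, ((σS k : ℂ)) • cmat (Wperpᵀ * Am k * Wperp) := by
      have hreal : C1 = Wperpᵀ * A0 * Wperp + ∑ k, σS k • (Wperpᵀ * Am k * Wperp) := by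
        rw [hC1, hAS, Matrix.mul_add, Matrix.add_mul, Matrix.mul_sum, Matrix.sum_mul]
        simp only [Matrix.mul_smul, Matrix.smul_mul]
      rw [hreal, cmat_add, cmat_sum]
      simp only [cmat_smul]
    rw [hC1c, hD]
    have hsplit : ∀ k, σ k • cmat (Wperpᵀ * Am k * Wperp)
        = (σS k : ℂ) • cmat (Wperpᵀ * Am k * Wperp)
          + (σ k - (σS k : ℂ)) • cmat (Wperpᵀ * Am k * Wperp) := by
      intro k
      rw [← add_smul]
      congr 1
      ring
    calc cmat (Wperpᵀ * A0 * Wperp) + ∑ k, σ k • cmat (Wperpᵀ * Am k * Wperp)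
        - (t : ℂ) • cmat C2
        = cmat (Wperpᵀ * A0 * Wperp)
          + (∑ k, (σS k : ℂ) • cmat (Wperpᵀ * Am k * Wperp)
            + ∑ k, (σ k - (σS k : ℂ)) • cmat (Wperpᵀ * Am k * Wperp))
          - (t : ℂ) • cmat C2 := by
          have hs : (∑ k : Fin d, σ k • cmat (Wperpᵀ * Am k * Wperp))
              = ∑ k : Fin d, ((σS k : ℂ) • cmat (Wperpᵀ * Am k * Wperp)
                + (σ k - (σS k : ℂ)) • cmat (Wperpᵀ * Am k * Wperp)) :=
            Finset.sum_congr rfl fun k _ => hsplit k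
          rw [hs, Finset.sum_add_distrib]
      _ = _ := by abel
  -- real quadratic form identities
  have qform : ∀ (Y : Matrix (Fin n) (Fin n) ℝ) (a : Fin m → ℝ),
      a ⬝ᵥ (Wperpᵀ * Y * Wperp) *ᵥ a = (Wperp *ᵥ a) ⬝ᵥ Y *ᵥ (Wperp *ᵥ a) := by
    intro Y a
    rw [Matrix.mul_assoc, ← Matrix.mulVec_mulVec, ← Matrix.mulVec_mulVec, dotmv]
  -- the key inequality for real vectors
  have ineq1 : ∀ a : Fin m → ℝ, α * ρ * Λ * (a ⬝ᵥ C2 *ᵥ a) ≤ a ⬝ᵥ C1 *ᵥ a := by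
    intro a
    set v : Fin n → ℝ := Wperp *ᵥ a with hv
    have hperp : ∀ w ∈ Ebar Abar M (ρ * Λ), v ⬝ᵥ Abar *ᵥ w = 0 := by
      intro w hw
      have hWt : Wperpᵀ *ᵥ (Abar *ᵥ w) = 0 := by
        funext j
        exact hWmem j w hw
      rw [hv, ← dotmv, hWt, dotProduct_zero]
    have hkey := key_spectral M Abar hM hAbar (ρ * Λ) v hperp
    have hsp := (hspec σS hσS v).1
    rw [← hAS] at hsp
    have e1 : a ⬝ᵥ C1 *ᵥ a = v ⬝ᵥ AS *ᵥ v := qform AS a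
    have e2 : a ⬝ᵥ C2 *ᵥ a = v ⬝ᵥ M *ᵥ v := qform M a
    rw [e1, e2]
    nlinarith [hα.le, mul_le_mul_of_nonneg_left hkey hα.le]
  have nonneg2 : ∀ a : Fin m → ℝ, 0 ≤ a ⬝ᵥ C2 *ᵥ a := by
    intro a
    rw [qform M a]
    simpa using hM.posSemidef.dotProduct_mulVec_nonneg (Wperp *ᵥ a)
  have pos2 : ∀ a : Fin m → ℝ, a ≠ 0 → 0 < a ⬝ᵥ C2 *ᵥ a := by
    intro a ha
    rw [qform M a]
    have hva : Wperp *ᵥ a ≠ 0 := fun h => ha (hWli a h)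
    simpa using hM.dotProduct_mulVec_pos hva
  -- kernel triviality
  have hker : ∀ z : Fin m → ℂ, T *ᵥ z = 0 → z = 0 := by
    intro z hz
    by_contra hzne
    set x : Fin m → ℝ := fun i => (z i).re with hx
    set y : Fin m → ℝ := fun i => (z i).im with hy
    have hq0 : star z ⬝ᵥ T *ᵥ z = 0 := by rw [hz, dotProduct_zero]
    have hqT : star z ⬝ᵥ T *ᵥ z
        = star z ⬝ᵥ (cmat C1) *ᵥ z + star z ⬝ᵥ D *ᵥ z
          - (t : ℂ) * (star z ⬝ᵥ (cmat C2) *ᵥ z) := by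
      rw [hT, Matrix.sub_mulVec, Matrix.add_mulVec, Matrix.smul_mulVec,
        dotProduct_sub, dotProduct_add, dotProduct_smul, smul_eq_mul]
    set q1r : ℝ := x ⬝ᵥ C1 *ᵥ x + y ⬝ᵥ C1 *ᵥ y with hq1r
    set q2r : ℝ := x ⬝ᵥ C2 *ᵥ x + y ⬝ᵥ C2 *ᵥ y with hq2r
    have hq1 : star z ⬝ᵥ (cmat C1) *ᵥ z = (q1r : ℂ) := qsplit C1 hC1sym z
    have hq2 : star z ⬝ᵥ (cmat C2) *ᵥ z = (q2r : ℂ) := qsplit C2 hC2sym z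
    have hxy : x ≠ 0 ∨ y ≠ 0 := by
      by_contra h
      push_neg at h
      apply hzne
      funext i
      have h1 : (z i).re = 0 := congrFun h.1 i
      have h2 : (z i).im = 0 := congrFun h.2 i
      exact Complex.ext h1 h2
    have hq2pos : 0 < q2r := by
      rcases hxy with h | h
      · have := pos2 x h
        have := nonneg2 y
        rw [hq2r]; linarith
      · have := pos2 y h
        have := nonneg2 x
        rw [hq2r]; linarith
    have hDb := hsmall z hzne
    rw [hq2] at hDb
    rw [Complex.ofReal_re] at hDb
    have habs : ‖star z ⬝ᵥ D *ᵥ z‖ < (α * ρ - 1) * Λ * q2r :=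
      (div_lt_iff₀ hq2pos).mp hDb
    have hre : q1r + (star z ⬝ᵥ D *ᵥ z).re - t * q2r = 0 := by
      have e : (q1r : ℂ) + star z ⬝ᵥ D *ᵥ z - (t : ℂ) * (q2r : ℂ) = 0 := by
        rw [← hq1, ← hq2, ← hqT, hq0]
      have := congrArg Complex.re e
      simpa [Complex.add_re, Complex.sub_re, Complex.ofReal_re, Complex.mul_re,
        Complex.ofReal_im] using this
    have h1 : α * ρ * Λ * q2r ≤ q1r := by
      have ha := ineq1 x
      have hb := ineq1 y
      rw [hq1r, hq2r]
      linarith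
    have h2 : -((α * ρ - 1) * Λ * q2r) < (star z ⬝ᵥ D *ᵥ z).re := by
      have hle : |(star z ⬝ᵥ D *ᵥ z).re| ≤ ‖star z ⬝ᵥ D *ᵥ z‖ :=
        Complex.abs_re_le_norm _
      have h := abs_lt.mp (lt_of_le_of_lt hle habs)
      linarith [h.1]
    have h3 : t * q2r < Λ * q2r := by
      exact mul_lt_mul_of_pos_right htΛ hq2pos
    nlinarith
  refine ⟨hker, ?_⟩
  apply Matrix.mulVec_injective_iff_isUnit.mp
  intro a b hab
  have h0 : T *ᵥ (a - b) = 0 := by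
    rw [Matrix.mulVec_sub, hab, sub_self]
  have := hker _ h0
  rwa [sub_eq_zero] at this
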